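/- Let x ≤ 0 and u > 1 − 2x. Then 0 ≤ 2·arctan(2u/(1−2x)) − [π − (1−2x)/u] ≤ (1−2x)³/(12u³). -/

import Mathlib

open Real

lemma arctan_le_self_aux {s : ℝ} (hs : 0 ≤ s) : Real.arctan s ≤ s := by
  have h : Monotone (fun t : ℝ => t - Real.arctan t) := by
    apply monotone_of_deriv_nonneg
    · exact differentiable_id.sub Real.differentiable_arctan
    · intro t
      have ht : HasDerivAt (fun t : ℝ => t - Real.arctan t) (1 - 1/(1+t^2)) t :=
        (hasDerivAt_id t).sub (Real.hasDerivAt_arctan t)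
      rw [ht.deriv]
      have h1 : (0:ℝ) < 1 + t^2 := by positivity
      rw [sub_nonneg, div_le_one h1]; nlinarith
  have := h hs
  simpa [Real.arctan_zero] using this

lemma self_sub_cube_le_arctan {s : ℝ} (hs : 0 ≤ s) : s - s^3/3 ≤ Real.arctan s := by
  have h : Monotone (fun t : ℝ => Real.arctan t - (t - t^3/3)) := by
    apply monotone_of_deriv_nonneg
    · exact Real.differentiable_arctan.sub (by fun_prop)
    · intro t
      have ht : HasDerivAt (fun t : ℝ => Real.arctan t - (t - t^3/3))
          (1/(1+t^2) - (1 - 3*t^2/3)) t := by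
        exact (Real.hasDerivAt_arctan t).sub
          (((hasDerivAt_id t).sub (((hasDerivAt_pow 3 t)).div_const 3)).congr_deriv (by ring))
      rw [ht.deriv]
      have h1 : (0:ℝ) < 1 + t^2 := by positivity
      rw [sub_nonneg, le_div_iff₀ h1]
      nlinarith
  have := h hs
  simpa [Real.arctan_zero] using this

theorem arctan_half_bounds (x u : ℝ) (hx : x ≤ 0) (hu : 1 - 2 * x < u) :
    0 ≤ 2 * Real.arctan (2 * u / (1 - 2 * x)) - (Real.pi - (1 - 2 * x) / u) ∧
    2 * Real.arctan (2 * u / (1 - 2 * x)) - (Real.pi - (1 - 2 * x) / u)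
      ≤ (1 - 2 * x) ^ 3 / (12 * u ^ 3) := by
  set a := 1 - 2 * x with ha
  have ha1 : (1:ℝ) ≤ a := by simp [ha]; linarith
  have ha0 : (0:ℝ) < a := by linarith
  have hu0 : (0:ℝ) < u := by linarith
  have htpos : (0:ℝ) < 2 * u / a := by positivity
  have key : Real.arctan (2 * u / a)⁻¹ = π / 2 - Real.arctan (2 * u / a) :=
    Real.arctan_inv_of_pos htpos
  have hinv : (2 * u / a)⁻¹ = a / (2 * u) := by
    field_simp
  rw [hinv] at key
  set s := a / (2 * u) with hs
  have hs0 : 0 ≤ s := by positivity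
  have harc : 2 * Real.arctan (2 * u / a) = π - 2 * Real.arctan s := by
    rw [show Real.arctan (2*u/a) = π/2 - Real.arctan s by linarith [key]]; ring
  have hau : a / u = 2 * s := by rw [hs]; field_simp
  have hle := arctan_le_self_aux hs0
  have hge := self_sub_cube_le_arctan hs0
  have hcube : a ^ 3 / (12 * u ^ 3) = 2 * s ^ 3 / 3 := by
    rw [hs]; field_simp; ring
  constructor
  · rw [harc, hau]; linarith
  · rw [harc, hau, hcube]; linarith
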